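/- For positive integers n and k with k < (n+1)/2, the circulant graph C(n; {1, 2, ..., k}) is 2-word-representable; that is, there is a 2-uniform word over the alphabet {0, 1, ..., n-1} that represents C(n; {1, 2, ..., k}). -/

import Mathlib

/-- The circulant graph `C(n; S)`: vertex set `ZMod n`, with distinct `i`, `j` adjacent iff
`(i - j) mod n` or `(j - i) mod n` lies in `S`. -/
def circGraph (n : ℕ) (S : Set ℕ) : SimpleGraph (ZMod n) :=
  SimpleGraph.fromRel (fun i j => ∃ a ∈ S, i - j = (a : ZMod n))

/-- Two distinct letters `x` and `y` alternate in the word `w` if the subword of `w` consisting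
of all occurrences of `x` and `y` has no two equal consecutive letters. -/
def Alternate {V : Type*} [DecidableEq V] (w : List V) (x y : V) : Prop :=
  (w.filter fun z => decide (z = x ∨ z = y)).Chain' (· ≠ ·)

/-- A word `w` represents the graph `G` if every vertex occurs in `w` and two distinct
vertices are adjacent iff they alternate in `w`. -/
def Represents {V : Type*} [DecidableEq V] (w : List V) (G : SimpleGraph V) : Prop :=
  (∀ v : V, v ∈ w) ∧ ∀ x y : V, x ≠ y → (G.Adj x y ↔ Alternate w x y)

/-- `w` is a `k`-uniform word (each letter occurring in `w` occurs exactly `k` times)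
representing the graph `G`. -/
def KUniformRepresents {V : Type*} [DecidableEq V] (k : ℕ) (w : List V) (G : SimpleGraph V) :
    Prop :=
  (∀ v ∈ w, w.count v = k) ∧ Represents w G

namespace CircAux

lemma flatMap_support {α : Type*} (F : ℕ → List α) :
    ∀ l : List ℕ, l.flatMap F = (l.filter fun i => !(F i).isEmpty).flatMap F := by
  intro l
  induction l with
  | nil => rfl
  | cons a l ih =>
    by_cases h : (F a).isEmpty
    · have h0 : F a = [] := List.isEmpty_iff.mp h
      simp [List.filter_cons, h, h0, ih]
    · simp [List.filter_cons, h, ih, List.flatMap_cons]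

lemma filter_range_eq (n : ℕ) (P : ℕ → Bool) (l : List ℕ)
    (hl : l.Pairwise (· < ·)) (hmem : ∀ i, i < n → (P i = true ↔ i ∈ l))
    (hsub : ∀ i ∈ l, i < n) :
    (List.range n).filter P = l := by
  refine (fun hp h1 h2 => List.Perm.eq_of_pairwise (le := (· < ·))
    (fun a b _ _ h1 h2 => absurd (h1.trans h2) (lt_irrefl a)) h1 h2 hp) ?_ ?_ ?_
  · rw [List.perm_ext_iff_of_nodup ((List.nodup_range (n := n)).filter P) hl.nodup]
    intro i
    simp only [List.mem_filter, List.mem_range]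
    constructor
    · rintro ⟨hi, hp⟩; exact (hmem i hi).mp hp
    · intro hi; exact ⟨hsub i hi, (hmem i (hsub i hi)).mpr hi⟩
  · exact (List.pairwise_lt_range (n := n)).filter P
  · exact hl

lemma range_flatMap_eq {α : Type*} (n : ℕ) (F : ℕ → List α) (l : List ℕ)
    (hl : l.Pairwise (· < ·))
    (hmem : ∀ i, i < n → (F i ≠ [] ↔ i ∈ l))
    (hsub : ∀ i ∈ l, i < n) :
    (List.range n).flatMap F = l.flatMap F := by
  rw [flatMap_support F (List.range n),
    filter_range_eq n _ l hl (fun i hi => by simpa using hmem i hi) hsub]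

/-- the 2-uniform word representing `C(n; {1..k})` when `2k < n`. -/
def wrd (n k : ℕ) : List (ZMod n) :=
  (List.range n).flatMap fun (j : ℕ) => [(j : ZMod n), (j : ZMod n) - (k : ZMod n)]

/-- block contribution to the filtered word -/
def Fblk (n k : ℕ) (x y : ZMod n) (j : ℕ) : List (ZMod n) :=
  [(j : ZMod n), (j : ZMod n) - (k : ZMod n)].filter fun z => decide (z = x ∨ z = y)

variable {n k : ℕ}

lemma cast_eq_iff [NeZero n] {i : ℕ} (hi : i < n) (z : ZMod n) :
    ((i : ZMod n) = z) ↔ i = z.val := by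
  constructor
  · rintro rfl; rw [ZMod.val_cast_of_lt hi]
  · rintro rfl; exact ZMod.natCast_rightInverse z

lemma cast_val [NeZero n] (z : ZMod n) : ((z.val : ℕ) : ZMod n) = z :=
  ZMod.natCast_rightInverse z

lemma cast_add_sub [NeZero n] (z : ZMod n) :
    ((z.val + k : ℕ) : ZMod n) - (k : ZMod n) = z := by
  rw [Nat.cast_add, cast_val, add_sub_cancel_right]

lemma cast_wrap_sub [NeZero n] (z : ZMod n) (h : n ≤ z.val + k) :
    ((z.val + k - n : ℕ) : ZMod n) - (k : ZMod n) = z := by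
  rw [Nat.cast_sub h, Nat.cast_add, cast_val, ZMod.natCast_self, sub_zero,
    add_sub_cancel_right]

lemma sub_k_eq_iff [NeZero n] (hkn : k < n) {i : ℕ} (hi : i < n) (z : ZMod n) :
    ((i : ZMod n) - (k : ZMod n) = z) ↔ i = (z.val + k) % n := by
  rw [sub_eq_iff_eq_add, cast_eq_iff hi, ZMod.val_add, ZMod.val_cast_of_lt hkn]

lemma Fblk_eval [NeZero n] (hkn : k < n) (x y : ZMod n) {j : ℕ} (hj : j < n) :
    Fblk n k x y j =
      (if j = x.val ∨ j = y.val then [(j : ZMod n)] else []) ++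
      (if j = (x.val + k) % n ∨ j = (y.val + k) % n then [(j : ZMod n) - (k : ZMod n)]
        else []) := by
  unfold Fblk
  rw [List.filter_cons, List.filter_cons, List.filter_nil]
  by_cases h1 : j = x.val ∨ j = y.val <;>
    by_cases h2 : j = (x.val + k) % n ∨ j = (y.val + k) % n <;>
      simp [h1, h2, cast_eq_iff hj, sub_k_eq_iff hkn hj]

lemma Fblk_fst [NeZero n] (hkn : k < n) (x y : ZMod n) (j : ℕ) (hj : j < n)
    (h1 : j = x.val ∨ j = y.val) (h2 : ¬(j = (x.val + k) % n ∨ j = (y.val + k) % n)) :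
    Fblk n k x y j = [(j : ZMod n)] := by
  rw [Fblk_eval hkn x y hj, if_pos h1, if_neg h2, List.append_nil]

lemma Fblk_snd [NeZero n] (hkn : k < n) (x y : ZMod n) (j : ℕ) (hj : j < n)
    (h1 : ¬(j = x.val ∨ j = y.val)) (h2 : j = (x.val + k) % n ∨ j = (y.val + k) % n) :
    Fblk n k x y j = [(j : ZMod n) - (k : ZMod n)] := by
  rw [Fblk_eval hkn x y hj, if_neg h1, if_pos h2, List.nil_append]

lemma Fblk_both [NeZero n] (hkn : k < n) (x y : ZMod n) (j : ℕ) (hj : j < n)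
    (h1 : j = x.val ∨ j = y.val) (h2 : j = (x.val + k) % n ∨ j = (y.val + k) % n) :
    Fblk n k x y j = [(j : ZMod n), (j : ZMod n) - (k : ZMod n)] := by
  rw [Fblk_eval hkn x y hj, if_pos h1, if_pos h2]; rfl

lemma wrd_filter_eq [NeZero n] (hkn : k < n) (x y : ZMod n) (l : List ℕ)
    (hl : l.Pairwise (· < ·)) (hsub : ∀ i ∈ l, i < n)
    (hmem : ∀ i, i < n →
      ((i = x.val ∨ i = y.val ∨ i = (x.val + k) % n ∨ i = (y.val + k) % n) ↔ i ∈ l)) :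
    (wrd n k).filter (fun z => decide (z = x ∨ z = y)) = l.flatMap (Fblk n k x y) := by
  unfold wrd
  rw [List.filter_flatMap]
  exact range_flatMap_eq n _ l hl
    (fun i hi => by
      show Fblk n k x y i ≠ [] ↔ i ∈ l
      rw [Fblk_eval hkn x y hi]
      constructor
      · intro hne
        apply (hmem i hi).mp
        by_contra hc
        push_neg at hc
        obtain ⟨c1, c2, c3, c4⟩ := hc
        simp [c1, c2, c3, c4] at hne
      · intro hil
        have := (hmem i hi).mpr hil
        rcases this with h | h | h | h <;> simp [h])
    hsub


lemma key [NeZero n] (hk : 0 < k) (hkn2 : 2 * k < n) (x y : ZMod n)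
    (hlt : x.val < y.val) :
    ((wrd n k).filter fun z => decide (z = x ∨ z = y)).Chain' (· ≠ ·) ↔
      (y.val - x.val ≤ k ∨ n - (y.val - x.val) ≤ k) := by
  have hkn : k < n := by omega
  have hbn : y.val < n := ZMod.val_lt y
  have hxy : x ≠ y := fun h => by rw [h] at hlt; exact lt_irrefl _ hlt
  have hyx : y ≠ x := hxy.symm
  by_cases hw1 : y.val + k < n
  · have e1 : (x.val + k) % n = x.val + k := Nat.mod_eq_of_lt (by omega)
    have e2 : (y.val + k) % n = y.val + k := Nat.mod_eq_of_lt (by omega)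
    rcases Nat.lt_trichotomy (y.val - x.val) k with hdk | hdk | hdk
    · -- C1 : d < k, no wrap
      rw [wrd_filter_eq hkn x y [x.val, y.val, x.val + k, y.val + k]
          (by simp [List.pairwise_cons]; omega)
          (by simp; omega)
          (by intro i hi; rw [e1, e2]
              simp only [List.mem_cons, List.not_mem_nil, or_false]; try omega),
        List.flatMap_cons, List.flatMap_cons, List.flatMap_cons, List.flatMap_cons,
        List.flatMap_nil,
        Fblk_fst hkn x y x.val (by omega) (by omega) (by rw [e1, e2]; omega),
        Fblk_fst hkn x y y.val (by omega) (by omega) (by rw [e1, e2]; omega),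
        Fblk_snd hkn x y (x.val + k) (by omega) (by omega) (by rw [e1, e2]; omega),
        Fblk_snd hkn x y (y.val + k) (by omega) (by omega) (by rw [e1, e2]; omega)]
      simp only [cast_val, cast_add_sub, List.append_nil, List.singleton_append,
        List.cons_append]
      exact iff_of_true (by simp [List.Chain', List.isChain_cons_cons, hxy, hyx]) (by omega)
    · -- C4 : d = k, no wrap
      have m1 : y - (k : ZMod n) = x := by
        rw [← cast_val y, show y.val = x.val + k by omega]; exact cast_add_sub x
      rw [wrd_filter_eq hkn x y [x.val, y.val, y.val + k]
          (by simp [List.pairwise_cons]; omega)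
          (by simp; omega)
          (by intro i hi; rw [e1, e2]
              simp only [List.mem_cons, List.not_mem_nil, or_false]; try omega),
        List.flatMap_cons, List.flatMap_cons, List.flatMap_cons, List.flatMap_nil,
        Fblk_fst hkn x y x.val (by omega) (by omega) (by rw [e1, e2]; omega),
        Fblk_both hkn x y y.val (by omega) (by omega) (by rw [e1, e2]; omega),
        Fblk_snd hkn x y (y.val + k) (by omega) (by omega) (by rw [e1, e2]; omega)]
      simp only [cast_val, cast_add_sub, m1, List.append_nil, List.singleton_append,
        List.cons_append]
      exact iff_of_true (by simp [List.Chain', List.isChain_cons_cons, hxy, hyx]) (by omega)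
    · -- C6 : k < d < n - k, not adjacent
      rw [wrd_filter_eq hkn x y [x.val, x.val + k, y.val, y.val + k]
          (by simp [List.pairwise_cons]; omega)
          (by simp; omega)
          (by intro i hi; rw [e1, e2]
              simp only [List.mem_cons, List.not_mem_nil, or_false]; try omega),
        List.flatMap_cons, List.flatMap_cons, List.flatMap_cons, List.flatMap_cons,
        List.flatMap_nil,
        Fblk_fst hkn x y x.val (by omega) (by omega) (by rw [e1, e2]; omega),
        Fblk_snd hkn x y (x.val + k) (by omega) (by omega) (by rw [e1, e2]; omega),
        Fblk_fst hkn x y y.val (by omega) (by omega) (by rw [e1, e2]; omega),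
        Fblk_snd hkn x y (y.val + k) (by omega) (by omega) (by rw [e1, e2]; omega)]
      simp only [cast_val, cast_add_sub, List.append_nil, List.singleton_append,
        List.cons_append]
      exact iff_of_false (by simp [List.Chain', List.isChain_cons_cons]) (by omega)
  · by_cases hw2 : x.val + k < n
    · have e1 : (x.val + k) % n = x.val + k := Nat.mod_eq_of_lt (by omega)
      have e2 : (y.val + k) % n = y.val + k - n := by
        rw [Nat.mod_eq_sub_mod (by omega)]; exact Nat.mod_eq_of_lt (by omega)
      have w2 : ((y.val + k - n : ℕ) : ZMod n) - (k : ZMod n) = y :=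
        cast_wrap_sub y (by omega)
      rcases Nat.lt_trichotomy (y.val - x.val) (n - k) with hdn | hdn | hdn
      · rcases Nat.lt_trichotomy (y.val - x.val) k with hdk | hdk | hdk
        · -- C2 : d < k, y wraps
          rw [wrd_filter_eq hkn x y [y.val + k - n, x.val, y.val, x.val + k]
              (by simp [List.pairwise_cons]; omega)
              (by simp; omega)
              (by intro i hi; rw [e1, e2]
                  simp only [List.mem_cons, List.not_mem_nil, or_false]; try omega),
            List.flatMap_cons, List.flatMap_cons, List.flatMap_cons, List.flatMap_cons,
            List.flatMap_nil,
            Fblk_snd hkn x y (y.val + k - n) (by omega) (by omega) (by rw [e1, e2]; omega),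
            Fblk_fst hkn x y x.val (by omega) (by omega) (by rw [e1, e2]; omega),
            Fblk_fst hkn x y y.val (by omega) (by omega) (by rw [e1, e2]; omega),
            Fblk_snd hkn x y (x.val + k) (by omega) (by omega) (by rw [e1, e2]; omega)]
          simp only [cast_val, cast_add_sub, w2, List.append_nil, List.singleton_append,
            List.cons_append]
          exact iff_of_true (by simp [List.Chain', List.isChain_cons_cons, hxy, hyx]) (by omega)
        · -- C5 : d = k, y wraps
          have m1 : y - (k : ZMod n) = x := by
            rw [← cast_val y, show y.val = x.val + k by omega]; exact cast_add_sub x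
          rw [wrd_filter_eq hkn x y [y.val + k - n, x.val, y.val]
              (by simp [List.pairwise_cons]; omega)
              (by simp; omega)
              (by intro i hi; rw [e1, e2]
                  simp only [List.mem_cons, List.not_mem_nil, or_false]; try omega),
            List.flatMap_cons, List.flatMap_cons, List.flatMap_cons, List.flatMap_nil,
            Fblk_snd hkn x y (y.val + k - n) (by omega) (by omega) (by rw [e1, e2]; omega),
            Fblk_fst hkn x y x.val (by omega) (by omega) (by rw [e1, e2]; omega),
            Fblk_both hkn x y y.val (by omega) (by omega) (by rw [e1, e2]; omega)]
          simp only [cast_val, cast_add_sub, m1, w2, List.append_nil, List.singleton_append,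
            List.cons_append]
          exact iff_of_true (by simp [List.Chain', List.isChain_cons_cons, hxy, hyx]) (by omega)
        · -- C7 : k < d < n - k, y wraps, not adjacent
          rw [wrd_filter_eq hkn x y [y.val + k - n, x.val, x.val + k, y.val]
              (by simp [List.pairwise_cons]; omega)
              (by simp; omega)
              (by intro i hi; rw [e1, e2]
                  simp only [List.mem_cons, List.not_mem_nil, or_false]; try omega),
            List.flatMap_cons, List.flatMap_cons, List.flatMap_cons, List.flatMap_cons,
            List.flatMap_nil,
            Fblk_snd hkn x y (y.val + k - n) (by omega) (by omega) (by rw [e1, e2]; omega),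
            Fblk_fst hkn x y x.val (by omega) (by omega) (by rw [e1, e2]; omega),
            Fblk_snd hkn x y (x.val + k) (by omega) (by omega) (by rw [e1, e2]; omega),
            Fblk_fst hkn x y y.val (by omega) (by omega) (by rw [e1, e2]; omega)]
          simp only [cast_val, cast_add_sub, w2, List.append_nil, List.singleton_append,
            List.cons_append]
          exact iff_of_false (by simp [List.Chain', List.isChain_cons_cons]) (by omega)
      · -- C8 : d = n - k
        have m2 : x - (k : ZMod n) = y := by
          rw [← cast_val x, show x.val = y.val + k - n by omega]
          exact cast_wrap_sub y (by omega)
        rw [wrd_filter_eq hkn x y [x.val, x.val + k, y.val]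
            (by simp [List.pairwise_cons]; omega)
            (by simp; omega)
            (by intro i hi; rw [e1, e2]
                simp only [List.mem_cons, List.not_mem_nil, or_false]; try omega),
          List.flatMap_cons, List.flatMap_cons, List.flatMap_cons, List.flatMap_nil,
          Fblk_both hkn x y x.val (by omega) (by omega) (by rw [e1, e2]; omega),
          Fblk_snd hkn x y (x.val + k) (by omega) (by omega) (by rw [e1, e2]; omega),
          Fblk_fst hkn x y y.val (by omega) (by omega) (by rw [e1, e2]; omega)]
        simp only [cast_val, cast_add_sub, m2, List.append_nil, List.singleton_append,
          List.cons_append]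
        exact iff_of_true (by simp [List.Chain', List.isChain_cons_cons, hxy, hyx]) (by omega)
      · -- C9 : d > n - k
        rw [wrd_filter_eq hkn x y [x.val, y.val + k - n, x.val + k, y.val]
            (by simp [List.pairwise_cons]; omega)
            (by simp; omega)
            (by intro i hi; rw [e1, e2]
                simp only [List.mem_cons, List.not_mem_nil, or_false]; try omega),
          List.flatMap_cons, List.flatMap_cons, List.flatMap_cons, List.flatMap_cons,
          List.flatMap_nil,
          Fblk_fst hkn x y x.val (by omega) (by omega) (by rw [e1, e2]; omega),
          Fblk_snd hkn x y (y.val + k - n) (by omega) (by omega) (by rw [e1, e2]; omega),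
          Fblk_snd hkn x y (x.val + k) (by omega) (by omega) (by rw [e1, e2]; omega),
          Fblk_fst hkn x y y.val (by omega) (by omega) (by rw [e1, e2]; omega)]
        simp only [cast_val, cast_add_sub, w2, List.append_nil, List.singleton_append,
          List.cons_append]
        exact iff_of_true (by simp [List.Chain', List.isChain_cons_cons, hxy, hyx]) (by omega)
    · -- C3 : both wrap
      have e1 : (x.val + k) % n = x.val + k - n := by
        rw [Nat.mod_eq_sub_mod (by omega)]; exact Nat.mod_eq_of_lt (by omega)
      have e2 : (y.val + k) % n = y.val + k - n := by
        rw [Nat.mod_eq_sub_mod (by omega)]; exact Nat.mod_eq_of_lt (by omega)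
      have w1 : ((x.val + k - n : ℕ) : ZMod n) - (k : ZMod n) = x :=
        cast_wrap_sub x (by omega)
      have w2 : ((y.val + k - n : ℕ) : ZMod n) - (k : ZMod n) = y :=
        cast_wrap_sub y (by omega)
      rw [wrd_filter_eq hkn x y [x.val + k - n, y.val + k - n, x.val, y.val]
          (by simp [List.pairwise_cons]; omega)
          (by simp; omega)
          (by intro i hi; rw [e1, e2]
              simp only [List.mem_cons, List.not_mem_nil, or_false]; try omega),
        List.flatMap_cons, List.flatMap_cons, List.flatMap_cons, List.flatMap_cons,
        List.flatMap_nil,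
        Fblk_snd hkn x y (x.val + k - n) (by omega) (by omega) (by rw [e1, e2]; omega),
        Fblk_snd hkn x y (y.val + k - n) (by omega) (by omega) (by rw [e1, e2]; omega),
        Fblk_fst hkn x y x.val (by omega) (by omega) (by rw [e1, e2]; omega),
        Fblk_fst hkn x y y.val (by omega) (by omega) (by rw [e1, e2]; omega)]
      simp only [cast_val, w1, w2, List.append_nil, List.singleton_append,
        List.cons_append]
      exact iff_of_true (by simp [List.Chain', List.isChain_cons_cons, hxy, hyx]) (by omega)


lemma count_wrd [NeZero n] (hk : 0 < k) (hkn2 : 2 * k < n) (v : ZMod n) :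
    (wrd n k).count v = 2 := by
  have hkn : k < n := by omega
  have hvn : v.val < n := ZMod.val_lt v
  rw [List.count, List.countP_eq_length_filter]
  have hpe : (wrd n k).filter (· == v) =
      (wrd n k).filter (fun z => decide (z = v ∨ z = v)) :=
    List.filter_congr (fun a _ => by
      simp only [or_self]; exact Bool.coe_iff_coe.mp (by simp))
  rw [hpe]
  by_cases hw : v.val + k < n
  · have e1 : (v.val + k) % n = v.val + k := Nat.mod_eq_of_lt (by omega)
    rw [wrd_filter_eq hkn v v [v.val, v.val + k]
        (by simp [List.pairwise_cons]; omega)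
        (by simp; omega)
        (by intro i hi; rw [e1]
            simp only [List.mem_cons, List.not_mem_nil, or_false]; try omega),
      List.flatMap_cons, List.flatMap_cons, List.flatMap_nil,
      Fblk_fst hkn v v v.val (by omega) (by omega) (by rw [e1]; omega),
      Fblk_snd hkn v v (v.val + k) (by omega) (by omega) (by rw [e1]; omega)]
    simp
  · have e1 : (v.val + k) % n = v.val + k - n := by
      rw [Nat.mod_eq_sub_mod (by omega)]; exact Nat.mod_eq_of_lt (by omega)
    rw [wrd_filter_eq hkn v v [v.val + k - n, v.val]
        (by simp [List.pairwise_cons]; omega)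
        (by simp; omega)
        (by intro i hi; rw [e1]
            simp only [List.mem_cons, List.not_mem_nil, or_false]; try omega),
      List.flatMap_cons, List.flatMap_cons, List.flatMap_nil,
      Fblk_snd hkn v v (v.val + k - n) (by omega) (by omega) (by rw [e1]; omega),
      Fblk_fst hkn v v v.val (by omega) (by omega) (by rw [e1]; omega)]
    simp

lemma mem_wrd [NeZero n] (v : ZMod n) : v ∈ wrd n k := by
  unfold wrd
  rw [List.mem_flatMap]
  exact ⟨v.val, by simp [List.mem_range, ZMod.val_lt], by simp [cast_val]⟩

/-- the word for the complete case `2k = n`. -/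
def cwrd (n : ℕ) : List (ZMod n) :=
  ((List.range n).map (Nat.cast)) ++ ((List.range n).map (Nat.cast))

lemma cwrd_filter [NeZero n] (x y : ZMod n) (hlt : x.val < y.val) :
    (cwrd n).filter (fun z => decide (z = x ∨ z = y)) = [x, y, x, y] := by
  have h1 : ((List.range n).map (Nat.cast : ℕ → ZMod n)).filter
      (fun z => decide (z = x ∨ z = y)) = [x, y] := by
    rw [List.filter_map,
      filter_range_eq n _ [x.val, y.val]
        (by simp [List.pairwise_cons, hlt])
        (fun i hi => by
          simp only [Function.comp_apply, decide_eq_true_eq, List.mem_cons,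
            List.not_mem_nil, or_false]
          rw [cast_eq_iff hi, cast_eq_iff hi])
        (by intro i hi
            simp only [List.mem_cons, List.not_mem_nil, or_false] at hi
            rcases hi with rfl | rfl
            · exact ZMod.val_lt x
            · exact ZMod.val_lt y)]
    simp [cast_val]
  unfold cwrd
  rw [List.filter_append, h1]
  rfl

lemma count_cwrd [NeZero n] (v : ZMod n) : (cwrd n).count v = 2 := by
  have h1 : ((List.range n).map (Nat.cast : ℕ → ZMod n)).count v = 1 := by
    rw [List.count, List.countP_eq_length_filter, List.filter_map,
      filter_range_eq n _ [v.val]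
        (by simp)
        (fun i hi => by
          simp only [Function.comp_apply, List.mem_cons, List.not_mem_nil, or_false,
            beq_iff_eq]
          rw [cast_eq_iff hi])
        (by simp [ZMod.val_lt])]
    simp
  unfold cwrd
  rw [List.count_append, h1]

lemma mem_cwrd [NeZero n] (v : ZMod n) : v ∈ cwrd n := by
  unfold cwrd
  rw [List.mem_append, List.mem_map]
  exact Or.inl ⟨v.val, by simp [List.mem_range, ZMod.val_lt], cast_val v⟩

lemma filter_comm_pred {V : Type*} [DecidableEq V] (w : List V) (x y : V) :
    w.filter (fun z => decide (z = x ∨ z = y)) =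
      w.filter (fun z => decide (z = y ∨ z = x)) :=
  List.filter_congr (fun a _ => decide_eq_decide.mpr or_comm)

end CircAux

open CircAux in
lemma circ_adj_iff {n k : ℕ} [NeZero n] (hk : 0 < k) (hkn : k < n) (x y : ZMod n)
    (hlt : x.val < y.val) :
    (circGraph n (Set.Icc 1 k)).Adj x y ↔
      (y.val - x.val ≤ k ∨ n - (y.val - x.val) ≤ k) := by
  have hbn : y.val < n := ZMod.val_lt y
  have hxy : x ≠ y := fun h => by rw [h] at hlt; exact lt_irrefl _ hlt
  have hy : y - x = ((y.val - x.val : ℕ) : ZMod n) := by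
    rw [Nat.cast_sub hlt.le, cast_val, cast_val]
  have hx : x - y = ((n - (y.val - x.val) : ℕ) : ZMod n) := by
    rw [Nat.cast_sub (by omega), Nat.cast_sub hlt.le, cast_val, cast_val,
      ZMod.natCast_self]
    ring
  unfold circGraph
  rw [SimpleGraph.fromRel_adj]
  simp only [Set.mem_Icc]
  constructor
  · rintro ⟨-, ⟨e, ⟨he1, he2⟩, hee⟩ | ⟨e, ⟨he1, he2⟩, hee⟩⟩
    · right
      rw [hx] at hee
      have h2 := (cast_eq_iff (show n - (y.val - x.val) < n by omega) _).mp hee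
      rw [ZMod.val_cast_of_lt (by omega)] at h2
      omega
    · left
      rw [hy] at hee
      have h2 := (cast_eq_iff (show y.val - x.val < n by omega) _).mp hee
      rw [ZMod.val_cast_of_lt (by omega)] at h2
      omega
  · rintro (hle | hle)
    · exact ⟨hxy, Or.inr ⟨y.val - x.val, ⟨by omega, hle⟩, hy⟩⟩
    · exact ⟨hxy, Or.inl ⟨n - (y.val - x.val), ⟨by omega, hle⟩, hx⟩⟩

/-- `C(n; {1, 2, ..., k})` is 2-word-representable. -/
theorem circulant_one_to_k_two_word_representable (n k : ℕ) (hn : 0 < n) (hk : 0 < k)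
    (h : (k : ℚ) < ((n : ℚ) + 1) / 2) :
    ∃ w : List (ZMod n), KUniformRepresents 2 w (circGraph n (Set.Icc 1 k)) := by
  haveI : NeZero n := ⟨hn.ne'⟩
  have h2k : 2 * k ≤ n := by
    have h2 : (2 * k : ℚ) < (n : ℚ) + 1 := by linarith
    have h3 : (2 * k : ℕ) < n + 1 := by exact_mod_cast h2
    omega
  have val_inj : ∀ x y : ZMod n, x.val = y.val → x = y := fun x y hv => by
    rw [← CircAux.cast_val x, hv, CircAux.cast_val]
  rcases eq_or_lt_of_le h2k with heq | hkn2
  · -- complete graph case: 2k = n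
    refine ⟨CircAux.cwrd n, fun v _ => CircAux.count_cwrd v, CircAux.mem_cwrd, ?_⟩
    intro x y hxy
    rcases Nat.lt_trichotomy x.val y.val with hlt | heqv | hlt
    · rw [circ_adj_iff hk (by omega) x y hlt]
      unfold Alternate
      rw [CircAux.cwrd_filter x y hlt]
      have hbn : y.val < n := ZMod.val_lt y
      exact iff_of_true (by omega) (by simp [List.Chain', List.isChain_cons_cons, hxy, Ne.symm hxy])
    · exact absurd (val_inj x y heqv) hxy
    · rw [SimpleGraph.adj_comm, circ_adj_iff hk (by omega) y x hlt]
      unfold Alternate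
      rw [CircAux.filter_comm_pred (CircAux.cwrd n) x y, CircAux.cwrd_filter y x hlt]
      have hbn : x.val < n := ZMod.val_lt x
      exact iff_of_true (by omega) (by simp [List.Chain', List.isChain_cons_cons, hxy, Ne.symm hxy])
  · -- main case: 2k < n
    refine ⟨CircAux.wrd n k, fun v _ => CircAux.count_wrd hk hkn2 v, CircAux.mem_wrd, ?_⟩
    intro x y hxy
    rcases Nat.lt_trichotomy x.val y.val with hlt | heqv | hlt
    · rw [circ_adj_iff hk (by omega) x y hlt]
      unfold Alternate
      exact (CircAux.key hk hkn2 x y hlt).symm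
    · exact absurd (val_inj x y heqv) hxy
    · rw [SimpleGraph.adj_comm, circ_adj_iff hk (by omega) y x hlt]
      unfold Alternate
      rw [CircAux.filter_comm_pred (CircAux.wrd n k) x y]
      exact (CircAux.key hk hkn2 y x hlt).symm
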